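/- arXiv:2605.05397 — 2 statements merged into one kernel-verified Lean document; each statement's English description precedes it below -/
import Mathlib

section
/- Let 1 < p < ∞, let m be a positive integer and let a_1, …, a_m be real numbers. The polynomial type operator Q_m : ℓ^p → ℓ^p defined by Q_m(x) = (∑_{i=1}^m a_i x_n^i)_{n=1}^∞ is well defined and Fréchet differentiable at every x̄ = (x̄_n)_n ∈ ℓ^p, with Fréchet derivative the continuous linear pointwise multiplication operator v = (v_n)_n ↦ (∑_{i=1}^m i a_i x̄_n^{i−1} v_n)_n. -/
open scoped ENNReal

namespace LpPolyAux

variable {p : ℝ≥0∞} [Fact (1 ≤ p)]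

theorem hp0 : p ≠ 0 := (lt_of_lt_of_le zero_lt_one (Fact.out : 1 ≤ p)).ne'

theorem hpt (hp' : p ≠ ⊤) : 0 < p.toReal := ENNReal.toReal_pos hp0 hp'

theorem mul_memℓp (hp' : p ≠ ⊤) (f g : lp (fun _ : ℕ => ℝ) p) :
    Memℓp (fun n => f n * g n) p := by
  have hpt := hpt hp'
  apply memℓp_gen
  have hg : Summable fun n => ‖g n‖ ^ p.toReal := (lp.memℓp g).summable hpt
  refine Summable.of_nonneg_of_le (fun n => Real.rpow_nonneg (norm_nonneg _) _)
    (fun n => ?_) (hg.mul_left (‖f‖ ^ p.toReal))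
  calc ‖f n * g n‖ ^ p.toReal = (‖f n‖ * ‖g n‖) ^ p.toReal := by rw [norm_mul]
    _ ≤ (‖f‖ * ‖g n‖) ^ p.toReal := by
        apply Real.rpow_le_rpow (by positivity)
          (mul_le_mul_of_nonneg_right (lp.norm_apply_le_norm hp0 f n) (norm_nonneg _)) hpt.le
    _ = ‖f‖ ^ p.toReal * ‖g n‖ ^ p.toReal := Real.mul_rpow (norm_nonneg _) (norm_nonneg _)

def mulFun (hp' : p ≠ ⊤) (f g : lp (fun _ : ℕ => ℝ) p) : lp (fun _ : ℕ => ℝ) p :=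
  ⟨fun n => f n * g n, mul_memℓp hp' f g⟩

@[simp] theorem mulFun_apply (hp' : p ≠ ⊤) (f g : lp (fun _ : ℕ => ℝ) p) (n : ℕ) :
    mulFun hp' f g n = f n * g n := rfl

theorem mulFun_norm (hp' : p ≠ ⊤) (f g : lp (fun _ : ℕ => ℝ) p) :
    ‖mulFun hp' f g‖ ≤ ‖f‖ * ‖g‖ := by
  have hpt := hpt hp'
  refine lp.norm_le_of_forall_sum_le hpt (mul_nonneg (norm_nonneg _) (norm_nonneg _)) fun s => ?_
  calc ∑ n ∈ s, ‖mulFun hp' f g n‖ ^ p.toReal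
      ≤ ∑ n ∈ s, ‖f‖ ^ p.toReal * ‖g n‖ ^ p.toReal := by
        refine Finset.sum_le_sum fun n _ => ?_
        rw [mulFun_apply, ← Real.mul_rpow (norm_nonneg _) (norm_nonneg _)]
        apply Real.rpow_le_rpow (norm_nonneg _)
        · rw [norm_mul]
          exact mul_le_mul_of_nonneg_right (lp.norm_apply_le_norm hp0 f n) (norm_nonneg _)
        · exact hpt.le
    _ = ‖f‖ ^ p.toReal * ∑ n ∈ s, ‖g n‖ ^ p.toReal := by rw [Finset.mul_sum]
    _ ≤ ‖f‖ ^ p.toReal * ‖g‖ ^ p.toReal :=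
        mul_le_mul_of_nonneg_left (lp.sum_rpow_le_norm_rpow hpt g s) (by positivity)
    _ = (‖f‖ * ‖g‖) ^ p.toReal := (Real.mul_rpow (norm_nonneg _) (norm_nonneg _)).symm

omit [Fact (1 ≤ p)] in
theorem coe_add (f g : lp (fun _ : ℕ => ℝ) p) (n : ℕ) : (f + g) n = f n + g n := by
  rw [lp.coeFn_add]; rfl

omit [Fact (1 ≤ p)] in
theorem coe_smul (c : ℝ) (f : lp (fun _ : ℕ => ℝ) p) (n : ℕ) : (c • f) n = c * f n := by
  rw [lp.coeFn_smul]; rfl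

noncomputable def mulCLM (hp' : p ≠ ⊤) :
    lp (fun _ : ℕ => ℝ) p →L[ℝ] lp (fun _ : ℕ => ℝ) p →L[ℝ] lp (fun _ : ℕ => ℝ) p :=
  LinearMap.mkContinuous₂
    (LinearMap.mk₂ ℝ (mulFun hp')
      (fun f₁ f₂ g => lp.ext (funext fun n => by
        simp only [mulFun_apply, coe_add]; ring))
      (fun c f g => lp.ext (funext fun n => by
        simp only [mulFun_apply, coe_smul]; ring))
      (fun f g₁ g₂ => lp.ext (funext fun n => by
        simp only [mulFun_apply, coe_add]; ring))
      (fun c f g => lp.ext (funext fun n => by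
        simp only [mulFun_apply, coe_smul]; ring)))
    1 (fun f g => by simpa using mulFun_norm hp' f g)

@[simp] theorem mulCLM_apply (hp' : p ≠ ⊤) (f g : lp (fun _ : ℕ => ℝ) p) (n : ℕ) :
    mulCLM hp' f g n = f n * g n := rfl

noncomputable def P (hp' : p ≠ ⊤) (i : ℕ) : lp (fun _ : ℕ => ℝ) p → lp (fun _ : ℕ => ℝ) p :=
  Nat.rec id (fun i ih x => mulCLM hp' x (ih x)) i

theorem P_apply (hp' : p ≠ ⊤) (i : ℕ) (x : lp (fun _ : ℕ => ℝ) p) (n : ℕ) :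
    P hp' i x n = x n ^ (i + 1) := by
  induction i with
  | zero => simp [P, pow_one]
  | succ i ih => rw [show P hp' (i+1) x = mulCLM hp' x (P hp' i x) from rfl,
      mulCLM_apply, ih]; ring

theorem P_hasFDerivAt (hp' : p ≠ ⊤) (i : ℕ) (x : lp (fun _ : ℕ => ℝ) p) :
    ∃ D : lp (fun _ : ℕ => ℝ) p →L[ℝ] lp (fun _ : ℕ => ℝ) p,
      (∀ v : lp (fun _ : ℕ => ℝ) p, ∀ n : ℕ, D v n = ((i : ℝ) + 1) * x n ^ i * v n) ∧
      HasFDerivAt (P hp' i) D x := by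
  induction i with
  | zero =>
    refine ⟨ContinuousLinearMap.id ℝ _, fun v n => by simp, hasFDerivAt_id x⟩
  | succ i ih =>
    obtain ⟨D, hD, hdiff⟩ := ih
    have hc : HasFDerivAt (fun y : lp (fun _ : ℕ => ℝ) p => mulCLM hp' y) (mulCLM hp') x :=
      (mulCLM hp').hasFDerivAt
    have h := hc.clm_apply hdiff
    refine ⟨_, fun v n => ?_, h⟩
    have h1 : ((mulCLM hp' x).comp D + (mulCLM hp').flip (P hp' i x)) v
        = mulCLM hp' x (D v) + mulCLM hp' v (P hp' i x) := by
      simp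
    rw [h1, coe_add, mulCLM_apply, mulCLM_apply, hD, P_apply]
    push_cast
    ring

end LpPolyAux

open LpPolyAux in
/-- For `1 < p < ∞`, a positive integer `m` and real coefficients `a 1, …, a m`, the
polynomial type operator `Q_m : ℓ^p → ℓ^p`, `(Q_m x)_n = ∑_{i=1}^m a_i x_n ^ i`, is well
defined and Fréchet differentiable at every `xbar ∈ ℓ^p`, with Fréchet derivative the
continuous linear pointwise multiplication operator
`v ↦ (∑_{i=1}^m i * a_i * xbar_n ^ (i-1) * v_n)_n`. -/
theorem lp_polynomial_operator_frechet_differentiable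
    (p : ℝ≥0∞) [Fact (1 ≤ p)] (hp : 1 < p) (hp' : p ≠ ⊤) (m : ℕ) (hm : 0 < m)
    (a : ℕ → ℝ) :
    (∀ x : lp (fun _ : ℕ => ℝ) p,
      Memℓp (fun n : ℕ => ∑ i ∈ Finset.Icc 1 m, a i * (x n) ^ i) p) ∧
    ∃ Q : lp (fun _ : ℕ => ℝ) p → lp (fun _ : ℕ => ℝ) p,
      (∀ x : lp (fun _ : ℕ => ℝ) p, ∀ n : ℕ,
        Q x n = ∑ i ∈ Finset.Icc 1 m, a i * (x n) ^ i) ∧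
      ∀ xbar : lp (fun _ : ℕ => ℝ) p,
        ∃ D : lp (fun _ : ℕ => ℝ) p →L[ℝ] lp (fun _ : ℕ => ℝ) p,
          (∀ v : lp (fun _ : ℕ => ℝ) p, ∀ n : ℕ,
            D v n = ∑ i ∈ Finset.Icc 1 m, (i : ℝ) * a i * (xbar n) ^ (i - 1) * v n) ∧
          HasFDerivAt Q D xbar := by
  set Q : lp (fun _ : ℕ => ℝ) p → lp (fun _ : ℕ => ℝ) p :=
    fun x => ∑ i ∈ Finset.Icc 1 m, a i • P hp' (i - 1) x with hQ
  have hQapp : ∀ x : lp (fun _ : ℕ => ℝ) p, ∀ n : ℕ,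
      Q x n = ∑ i ∈ Finset.Icc 1 m, a i * (x n) ^ i := by
    intro x n
    have : Q x n = ∑ i ∈ Finset.Icc 1 m, (a i • P hp' (i - 1) x) n := by
      rw [hQ]
      rw [show (∑ i ∈ Finset.Icc 1 m, a i • P hp' (i - 1) x : lp (fun _ : ℕ => ℝ) p) n
          = (⇑(∑ i ∈ Finset.Icc 1 m, a i • P hp' (i - 1) x) : ℕ → ℝ) n from rfl,
        lp.coeFn_sum, Finset.sum_apply]
    rw [this]
    refine Finset.sum_congr rfl fun i hi => ?_
    have hi1 : 1 ≤ i := (Finset.mem_Icc.mp hi).1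
    rw [coe_smul, P_apply, Nat.sub_add_cancel hi1]
  refine ⟨?_, Q, hQapp, ?_⟩
  · intro x
    have : (fun n : ℕ => ∑ i ∈ Finset.Icc 1 m, a i * (x n) ^ i) = ⇑(Q x) :=
      funext fun n => (hQapp x n).symm
    rw [this]
    exact lp.memℓp (Q x)
  · intro xbar
    choose Di hDi hdiff using fun i => P_hasFDerivAt hp' (i - 1) xbar
    refine ⟨∑ i ∈ Finset.Icc 1 m, a i • Di i, ?_, ?_⟩
    · intro v n
      rw [show ((∑ i ∈ Finset.Icc 1 m, a i • Di i) v : lp (fun _ : ℕ => ℝ) p) n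
          = (⇑(∑ i ∈ Finset.Icc 1 m, (a i • Di i) v) : ℕ → ℝ) n from by
            rw [ContinuousLinearMap.sum_apply],
        lp.coeFn_sum, Finset.sum_apply]
      refine Finset.sum_congr rfl fun i hi => ?_
      have hi1 : 1 ≤ i := (Finset.mem_Icc.mp hi).1
      rw [ContinuousLinearMap.smul_apply, coe_smul, hDi]
      have : ((i - 1 : ℕ) : ℝ) + 1 = (i : ℝ) := by
        rw [Nat.cast_sub hi1]; push_cast; ring
      rw [this]; ring
    · rw [hQ]
      exact HasFDerivAt.fun_sum fun i _ => (hdiff i).const_smul (a i)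
end

section
/- Let 1 < p < ∞, let m be a positive integer and let a_1, …, a_m be real numbers with a_1 ≠ 0, and let Q_m : ℓ^p → ℓ^p be the polynomial type operator Q_m(x) = (∑_{i=1}^m a_i x_n^i)_n. Let ⪯_K be the coordinatewise order on ℓ^p: x ⪯_K y iff x_n ≤ y_n for every n. Then Q_m has no ⪯_K-extrema: there is no x̄ ∈ ℓ^p such that Q_m(x) ⪯_K Q_m(x̄) for all x ∈ ℓ^p, and no x̄ ∈ ℓ^p such that Q_m(x̄) ⪯_K Q_m(x) for all x ∈ ℓ^p. -/
open scoped ENNReal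

/-- A polynomial `∑_{i=1}^m a_i t^i` with `a 1 ≠ 0` takes both signs near `0`. -/
lemma poly_takes_both_signs (m : ℕ) (hm : 0 < m) (a : ℕ → ℝ) (ha : a 1 ≠ 0) :
    ∃ tp tn : ℝ, (0 < ∑ i ∈ Finset.Icc 1 m, a i * tp ^ i) ∧
      (∑ i ∈ Finset.Icc 1 m, a i * tn ^ i < 0) := by
  set g : ℝ → ℝ := fun t => ∑ i ∈ Finset.Icc 1 m, a i * t ^ (i - 1) with hg
  have hgcont : Continuous g := by
    apply continuous_finset_sum
    intro i _
    fun_prop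
  have hg0 : g 0 = a 1 := by
    rw [hg]
    simp only
    rw [Finset.sum_eq_single 1]
    · simp
    · intro i hi hne
      have h1 : 1 ≤ i := (Finset.mem_Icc.mp hi).1
      have : 1 ≤ i - 1 := by omega
      rw [zero_pow (by omega), mul_zero]
    · intro h
      exact absurd (Finset.mem_Icc.mpr ⟨le_refl 1, hm⟩) h
  have hfac : ∀ t : ℝ, (∑ i ∈ Finset.Icc 1 m, a i * t ^ i) = t * g t := by
    intro t
    rw [hg, Finset.mul_sum]
    apply Finset.sum_congr rfl
    intro i hi
    have h1 : 1 ≤ i := (Finset.mem_Icc.mp hi).1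
    have : t ^ i = t * t ^ (i - 1) := by
      rw [← pow_succ']
      congr 1
      omega
    rw [this]; ring
  have hcont0 : ContinuousAt g 0 := hgcont.continuousAt
  rw [Metric.continuousAt_iff] at hcont0
  obtain ⟨δ, hδ, hδ'⟩ := hcont0 |a 1| (abs_pos.mpr ha)
  have hsign : ∀ t : ℝ, |t| < δ → 0 < g t * a 1 := by
    intro t ht
    have := hδ' (show dist t 0 < δ by simpa [Real.dist_eq] using ht)
    rw [Real.dist_eq, hg0] at this
    have h2 := abs_lt.mp this
    rcases lt_or_gt_of_ne ha with hneg | hpos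
    · have : g t < 0 := by rw [abs_of_neg hneg] at h2; linarith [h2.2]
      exact mul_pos_of_neg_of_neg this hneg
    · have : 0 < g t := by rw [abs_of_pos hpos] at h2; linarith [h2.1]
      exact mul_pos this hpos
  rcases lt_or_gt_of_ne ha with hneg | hpos
  · refine ⟨-(δ/2), δ/2, ?_, ?_⟩
    · rw [hfac]
      have h := hsign (-(δ/2)) (by rw [abs_neg, abs_of_pos (by linarith)]; linarith)
      nlinarith
    · rw [hfac]
      have h := hsign (δ/2) (by rw [abs_of_pos (by linarith)]; linarith)
      nlinarith
  · refine ⟨δ/2, -(δ/2), ?_, ?_⟩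
    · rw [hfac]
      have h := hsign (δ/2) (by rw [abs_of_pos (by linarith)]; linarith)
      nlinarith
    · rw [hfac]
      have h := hsign (-(δ/2)) (by rw [abs_neg, abs_of_pos (by linarith)]; linarith)
      nlinarith

/-- In `ℓ^p` with `p` finite and nontrivial, coordinates get below any positive bound. -/
lemma lp_exists_small_coord (p : ℝ≥0∞) [Fact (1 ≤ p)] (hp : 1 < p) (hp' : p ≠ ⊤)
    (f : lp (fun _ : ℕ => ℝ) p) {c : ℝ} (hc : 0 < c) : ∃ n : ℕ, |f n| < c := by
  have hptop : 0 < p.toReal := ENNReal.toReal_pos (by positivity) hp'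
  have hsum := (lp.memℓp f).summable hptop
  have htend := hsum.tendsto_atTop_zero
  have : ∀ᶠ n in Filter.atTop, ‖f n‖ ^ p.toReal < c ^ p.toReal := by
    apply htend.eventually_lt_const
    positivity
  obtain ⟨n, hn⟩ := this.exists
  refine ⟨n, ?_⟩
  by_contra h
  push_neg at h
  have : c ^ p.toReal ≤ ‖f n‖ ^ p.toReal := by
    apply Real.rpow_le_rpow (le_of_lt hc) _ (le_of_lt hptop)
    simpa [Real.norm_eq_abs] using h
  linarith

/-- For `1 < p < ∞`, a positive integer `m` and coefficients with `a 1 ≠ 0`, the polynomial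
type operator `Q_m : ℓ^p → ℓ^p`, `(Q_m x)_n = ∑_{i=1}^m a_i x_n^i`, has no extrema with
respect to the coordinatewise order `⪯_K` on `ℓ^p`: no point of `ℓ^p` is an absolute
`⪯_K`-maximum point of `Q_m`, and none is an absolute `⪯_K`-minimum point of `Q_m`. -/
theorem lp_polynomial_operator_no_order_extrema
    (p : ℝ≥0∞) [Fact (1 ≤ p)] (hp : 1 < p) (hp' : p ≠ ⊤) (m : ℕ) (hm : 0 < m)
    (a : ℕ → ℝ) (ha : a 1 ≠ 0)
    (Q : lp (fun _ : ℕ => ℝ) p → lp (fun _ : ℕ => ℝ) p)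
    (hQ : ∀ x : lp (fun _ : ℕ => ℝ) p, ∀ n : ℕ,
      Q x n = ∑ i ∈ Finset.Icc 1 m, a i * (x n) ^ i) :
    (¬ ∃ xbar : lp (fun _ : ℕ => ℝ) p, ∀ x : lp (fun _ : ℕ => ℝ) p, ∀ n : ℕ,
        Q x n ≤ Q xbar n) ∧
    (¬ ∃ xbar : lp (fun _ : ℕ => ℝ) p, ∀ x : lp (fun _ : ℕ => ℝ) p, ∀ n : ℕ,
        Q xbar n ≤ Q x n) := by
  obtain ⟨tp, tn, hpos, hneg⟩ := poly_takes_both_signs m hm a ha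
  constructor
  · rintro ⟨xbar, hxbar⟩
    obtain ⟨n, hn⟩ := lp_exists_small_coord p hp hp' (Q xbar) hpos
    set x : lp (fun _ : ℕ => ℝ) p := lp.single (E := fun _ : ℕ => ℝ) p n tp with hx
    have hxn : x n = tp := by rw [hx]; exact lp.single_apply_self (E := fun _ : ℕ => ℝ) p n tp
    have := hxbar x n
    rw [hQ x n, hxn] at this
    have h2 : Q xbar n ≤ |Q xbar n| := le_abs_self _
    linarith
  · rintro ⟨xbar, hxbar⟩
    obtain ⟨n, hn⟩ := lp_exists_small_coord p hp hp' (Q xbar) (neg_pos.mpr hneg)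
    set x : lp (fun _ : ℕ => ℝ) p := lp.single (E := fun _ : ℕ => ℝ) p n tn with hx
    have hxn : x n = tn := by rw [hx]; exact lp.single_apply_self (E := fun _ : ℕ => ℝ) p n tn
    have := hxbar x n
    rw [hQ x n, hxn] at this
    have h2 : -|Q xbar n| ≤ Q xbar n := neg_abs_le _
    have h3 : -(∑ i ∈ Finset.Icc 1 m, a i * tn ^ i) ≤ |Q xbar n| := by linarith
    linarith [abs_lt.mp hn]
end
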